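/- Let N ≥ 1, let ν_{j,N} = -cos((2j+1)π/(2N+2)) for j = 0, ..., N be the Chebyshev points of the first kind, and let ℓ_{j,N}^ν be the Lagrange basis polynomials associated with these points. Let T_k denote the k-th Chebyshev polynomial of the first kind. Then for every j = 0, ..., N and all real x, ℓ_{j,N}^ν(x) = (1/(N+1))·T_0(x) + Σ_{k=1}^{N-1} (2T_k(ν_{j,N})/(N+1))·T_k(x) + (-1)^{N-j}·(2/(N+1))·sin((2j+1)π/(2N+2))·T_N(x). -/

import Mathlib

open Polynomial Polynomial.Chebyshev Real


private lemma natDegree_T_pair (k : ℕ) :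
    (T ℝ (k : ℤ)).natDegree ≤ k ∧ (T ℝ ((k : ℤ) + 1)).natDegree ≤ k + 1 := by
  induction k with
  | zero => simp
  | succ n ih =>
    obtain ⟨h1, h2⟩ := ih
    have hcast : ((n + 1 : ℕ) : ℤ) = (n : ℤ) + 1 := by push_cast; ring
    refine ⟨hcast ▸ h2, ?_⟩
    rw [hcast, show (n : ℤ) + 1 + 1 = (n : ℤ) + 2 by ring, T_add_two]
    refine (Polynomial.natDegree_sub_le _ _).trans (max_le ?_ (h1.trans (by omega)))
    calc (2 * X * T ℝ ((n : ℤ) + 1)).natDegree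
        ≤ (2 * X : ℝ[X]).natDegree + (T ℝ ((n : ℤ) + 1)).natDegree :=
          Polynomial.natDegree_mul_le
      _ ≤ 1 + (n + 1) :=
          add_le_add (by compute_degree) h2
      _ ≤ n + 1 + 1 := by omega

private lemma natDegree_T_le (k : ℕ) : (T ℝ (k : ℤ)).natDegree ≤ k :=
  (natDegree_T_pair k).1

private lemma sum_cos_telescope (φ : ℝ) (n : ℕ) :
    2 * Real.sin (φ / 2) * ∑ k ∈ Finset.range (n + 1), Real.cos (k * φ)
      = Real.sin (((n : ℝ) + 1 / 2) * φ) + Real.sin (φ / 2) := by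
  induction n with
  | zero =>
    have h : ((0 : ℝ) + 1 / 2) * φ = φ / 2 := by ring
    simp [h]
    ring
  | succ n ih =>
    rw [Finset.sum_range_succ, mul_add, ih]
    have e1 : (((n : ℕ) + 1 : ℕ) : ℝ) * φ + φ / 2 = (((n : ℕ) + 1 : ℝ) + 1 / 2) * φ := by
      push_cast; ring
    have e2 : (((n : ℕ) + 1 : ℕ) : ℝ) * φ - φ / 2 = ((n : ℝ) + 1 / 2) * φ := by
      push_cast; ring
    have h1 := Real.sin_add ((((n : ℕ) + 1 : ℕ) : ℝ) * φ) (φ / 2)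
    have h2 := Real.sin_sub ((((n : ℕ) + 1 : ℕ) : ℝ) * φ) (φ / 2)
    rw [e1] at h1
    rw [e2] at h2
    push_cast at h1 h2 ⊢
    linarith [h1, h2]

private lemma sum_cos_Icc (N m : ℕ) (hm1 : 1 ≤ m) (hm2 : m ≤ 2 * N + 1) :
    ∑ k ∈ Finset.Icc 1 N, Real.cos ((k : ℝ) * ((m : ℝ) * π / ((N : ℝ) + 1)))
      = -(1 + (-1 : ℝ) ^ m) / 2 := by
  set φ : ℝ := (m : ℝ) * π / ((N : ℝ) + 1) with hφ
  have hN1 : (0 : ℝ) < (N : ℝ) + 1 := by positivity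
  have hs : 0 < Real.sin (φ / 2) := by
    apply Real.sin_pos_of_pos_of_lt_pi
    · have : (0 : ℝ) < (m : ℝ) * π := by
        have : (0 : ℝ) < (m : ℝ) := by exact_mod_cast hm1
        positivity
      positivity
    · rw [hφ]
      rw [div_div, div_lt_iff₀ (by positivity)]
      have hmlt : (m : ℝ) < 2 * (N : ℝ) + 2 := by
        have : (m : ℝ) ≤ 2 * (N : ℝ) + 1 := by exact_mod_cast hm2
        linarith
      calc (m : ℝ) * π < (2 * (N : ℝ) + 2) * π := by
            exact mul_lt_mul_of_pos_right hmlt Real.pi_pos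
        _ = π * (((N : ℝ) + 1) * 2) := by ring
  have key := sum_cos_telescope φ N
  have hang : ((N : ℝ) + 1 / 2) * φ = (m : ℝ) * π - φ / 2 := by
    rw [hφ]; field_simp; ring
  rw [hang, Real.sin_nat_mul_pi_sub] at key
  -- key : 2 * sin(φ/2) * Σ_{range (N+1)} = -((-1)^m * sin(φ/2)) + sin(φ/2)
  have hsplit : ∑ k ∈ Finset.range (N + 1), Real.cos ((k : ℝ) * φ)
      = 1 + ∑ k ∈ Finset.Icc 1 N, Real.cos ((k : ℝ) * φ) := by
    rw [Finset.range_eq_Ico, ← Finset.sum_Ico_consecutive _ (Nat.zero_le 1) (by omega)]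
    have : Finset.Ico 1 (N + 1) = Finset.Icc 1 N := by
      rw [Finset.Ico_add_one_right_eq_Icc]
    rw [this]
    norm_num
  rw [hsplit] at key
  have hs' : Real.sin (φ / 2) ≠ 0 := ne_of_gt hs
  field_simp at key ⊢
  nlinarith [key, hs]

private lemma ortho_helper (N : ℕ) (i j : ℕ) (hi : i ≤ N) (hj : j ≤ N) (hij : i ≤ j) :
    1 + ∑ k ∈ Finset.Icc 1 N,
        2 * Real.cos ((k : ℝ) * (π - (2 * (j : ℝ) + 1) * π / (2 * (N : ℝ) + 2)))
          * Real.cos ((k : ℝ) * (π - (2 * (i : ℝ) + 1) * π / (2 * (N : ℝ) + 2)))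
      = ((N : ℝ) + 1) * (if i = j then 1 else 0) := by
  set ψ : ℕ → ℝ := fun t => π - (2 * (t : ℝ) + 1) * π / (2 * (N : ℝ) + 2) with hψ
  set m1 : ℕ := 2 * N + 1 - (i + j) with hm1
  set m2 : ℕ := j - i with hm2
  have hN1 : (0 : ℝ) < (N : ℝ) + 1 := by positivity
  have hm1cast : (m1 : ℝ) = 2 * (N : ℝ) + 1 - (i : ℝ) - (j : ℝ) := by
    rw [hm1]
    have : i + j ≤ 2 * N + 1 := by omega
    push_cast [Nat.cast_sub this]
    ring
  have hm2cast : (m2 : ℝ) = (j : ℝ) - (i : ℝ) := by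
    rw [hm2]; push_cast [Nat.cast_sub hij]; ring
  have hterm : ∀ k ∈ Finset.Icc 1 N,
      2 * Real.cos ((k : ℝ) * ψ j) * Real.cos ((k : ℝ) * ψ i)
        = Real.cos ((k : ℝ) * ((m1 : ℝ) * π / ((N : ℝ) + 1)))
          + Real.cos ((k : ℝ) * ((m2 : ℝ) * π / ((N : ℝ) + 1))) := by
    intro k _
    have e1 : (k : ℝ) * ψ j + (k : ℝ) * ψ i = (k : ℝ) * ((m1 : ℝ) * π / ((N : ℝ) + 1)) := by
      rw [hm1cast, hψ]
      field_simp
      ring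
    have e2 : (k : ℝ) * ψ j - (k : ℝ) * ψ i = -((k : ℝ) * ((m2 : ℝ) * π / ((N : ℝ) + 1))) := by
      rw [hm2cast, hψ]
      field_simp
      ring
    rw [← e1, show Real.cos ((k : ℝ) * ((m2 : ℝ) * π / ((N : ℝ) + 1)))
        = Real.cos ((k : ℝ) * ψ j - (k : ℝ) * ψ i) from by rw [e2, Real.cos_neg],
      Real.cos_add, Real.cos_sub]
    ring
  rw [Finset.sum_congr rfl hterm, Finset.sum_add_distrib]
  have hm1sum : ∑ k ∈ Finset.Icc 1 N, Real.cos ((k : ℝ) * ((m1 : ℝ) * π / ((N : ℝ) + 1)))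
      = -(1 + (-1 : ℝ) ^ m1) / 2 :=
    sum_cos_Icc N m1 (by omega) (by omega)
  have hparity : m1 + m2 = 2 * (N - i) + 1 := by omega
  rcases eq_or_lt_of_le hij with rfl | hlt
  · -- i = j
    have hm2z : m2 = 0 := by omega
    have hm1odd : Odd m1 := by
      refine ⟨N - i, by omega⟩
    have hz : ∑ k ∈ Finset.Icc 1 N, Real.cos ((k : ℝ) * ((m2 : ℝ) * π / ((N : ℝ) + 1)))
        = (N : ℝ) := by
      rw [hm2z]
      simp [Nat.card_Icc]
    rw [hm1sum, hz, hm1odd.neg_one_pow, if_pos rfl]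
    ring
  · -- i < j
    have hne : ¬ (i = j) := by omega
    have hm2sum : ∑ k ∈ Finset.Icc 1 N, Real.cos ((k : ℝ) * ((m2 : ℝ) * π / ((N : ℝ) + 1)))
        = -(1 + (-1 : ℝ) ^ m2) / 2 :=
      sum_cos_Icc N m2 (by omega) (by omega)
    rw [hm1sum, hm2sum, if_neg hne]
    rcases Nat.even_or_odd m1 with h1 | h1
    · have h2 : Odd m2 := by
        rw [Nat.even_iff] at h1; rw [Nat.odd_iff]; omega
      rw [h1.neg_one_pow, h2.neg_one_pow]
      ring
    · have h2 : Even m2 := by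
        rw [Nat.odd_iff] at h1; rw [Nat.even_iff]; omega
      rw [h1.neg_one_pow, h2.neg_one_pow]
      ring

private lemma ortho (N i j : ℕ) (hi : i ≤ N) (hj : j ≤ N) :
    1 + ∑ k ∈ Finset.Icc 1 N,
        2 * Real.cos ((k : ℝ) * (π - (2 * (j : ℝ) + 1) * π / (2 * (N : ℝ) + 2)))
          * Real.cos ((k : ℝ) * (π - (2 * (i : ℝ) + 1) * π / (2 * (N : ℝ) + 2)))
      = ((N : ℝ) + 1) * (if i = j then 1 else 0) := by
  rcases le_total i j with h | h
  · exact ortho_helper N i j hi hj h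
  · have := ortho_helper N j i hj hi h
    rw [show (if j = i then (1:ℝ) else 0) = (if i = j then 1 else 0) by
      simp [eq_comm]] at this
    rw [← this]
    congr 1
    apply Finset.sum_congr rfl
    intro k _
    ring

/-- Chebyshev expansion of the Lagrange basis polynomials associated
with the Chebyshev points of the first kind. -/
theorem stmt_14 (N : ℕ) (hN : 1 ≤ N) (ν : Fin (N + 1) → ℝ)
    (hν : ∀ j, ν j = -Real.cos ((2 * (j : ℝ) + 1) * π / (2 * (N : ℝ) + 2)))
    (ℓ : Fin (N + 1) → Polynomial ℝ)
    (hdeg : ∀ j, (ℓ j).natDegree ≤ N)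
    (hval : ∀ i j, (ℓ j).eval (ν i) = if i = j then 1 else 0)
    (j : Fin (N + 1)) (x : ℝ) :
    (ℓ j).eval x =
      (1 / ((N : ℝ) + 1)) * (Polynomial.Chebyshev.T ℝ 0).eval x +
        (∑ k ∈ Finset.Icc 1 (N - 1),
          (2 * (Polynomial.Chebyshev.T ℝ (k : ℤ)).eval (ν j) / ((N : ℝ) + 1)) *
            (Polynomial.Chebyshev.T ℝ (k : ℤ)).eval x) +
        (-1 : ℝ) ^ (N - (j : ℕ)) * (2 / ((N : ℝ) + 1)) *
          Real.sin ((2 * (j : ℝ) + 1) * π / (2 * (N : ℝ) + 2)) *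
          (Polynomial.Chebyshev.T ℝ (N : ℤ)).eval x := by
  have hπ := Real.pi_pos
  have hN1 : (0 : ℝ) < (N : ℝ) + 1 := by positivity
  have hN1' : ((N : ℝ) + 1) ≠ 0 := ne_of_gt hN1
  -- angles
  set θr : Fin (N + 1) → ℝ := fun i => (2 * (i : ℝ) + 1) * π / (2 * (N : ℝ) + 2) with hθr
  have hθmem : ∀ i : Fin (N + 1), θr i ∈ Set.Ioo (0 : ℝ) π := by
    intro i
    have hi : (i : ℕ) ≤ N := Nat.lt_succ_iff.mp i.isLt
    constructor
    · apply div_pos (by positivity) (by positivity)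
    · rw [hθr]
      rw [div_lt_iff₀ (by positivity)]
      have : (2 * (i : ℝ) + 1) < 2 * (N : ℝ) + 2 := by
        have : (i : ℝ) ≤ (N : ℝ) := by exact_mod_cast hi
        linarith
      nlinarith
  have hν' : ∀ i, ν i = Real.cos (π - θr i) := by
    intro i
    rw [hν i, Real.cos_pi_sub]
  have hTeval : ∀ (n : ℤ) (i : Fin (N + 1)),
      (T ℝ n).eval (ν i) = Real.cos ((n : ℝ) * (π - θr i)) := by
    intro n i
    rw [hν' i, T_real_cos]
  -- the candidate polynomial
  set c : ℝ := (-1 : ℝ) ^ (N - (j : ℕ)) * (2 / ((N : ℝ) + 1)) * Real.sin (θr j) with hc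
  set Q : ℝ[X] := Polynomial.C (1 / ((N : ℝ) + 1)) * T ℝ 0 +
      (∑ k ∈ Finset.Icc 1 (N - 1),
        Polynomial.C (2 * (T ℝ (k : ℤ)).eval (ν j) / ((N : ℝ) + 1)) * T ℝ (k : ℤ)) +
      Polynomial.C c * T ℝ (N : ℤ) with hQ
  have hQx : ∀ y : ℝ, Q.eval y =
      (1 / ((N : ℝ) + 1)) * (T ℝ 0).eval y +
        (∑ k ∈ Finset.Icc 1 (N - 1),
          (2 * (T ℝ (k : ℤ)).eval (ν j) / ((N : ℝ) + 1)) * (T ℝ (k : ℤ)).eval y) +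
        c * (T ℝ (N : ℤ)).eval y := by
    intro y
    simp [hQ, Polynomial.eval_finset_sum]
  -- key: cos(N * (π - θr j)) = (-1)^(N-j) * sin (θr j)
  have hjN : (j : ℕ) ≤ N := Nat.lt_succ_iff.mp j.isLt
  have hTN : Real.cos ((N : ℝ) * (π - θr j)) =
      (-1 : ℝ) ^ (N - (j : ℕ)) * Real.sin (θr j) := by
    have e : (N : ℝ) * (π - θr j) = ((N - (j : ℕ) : ℕ) : ℝ) * π - (π / 2 - θr j) := by
      rw [Nat.cast_sub hjN, hθr]
      field_simp
      ring
    rw [e, Real.cos_nat_mul_pi_sub, Real.cos_pi_div_two_sub]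
  have hsq : (-1 : ℝ) ^ (N - (j : ℕ)) * (-1 : ℝ) ^ (N - (j : ℕ)) = 1 := by
    rw [← pow_add]
    exact Even.neg_one_pow ⟨N - (j : ℕ), rfl⟩
  -- values of Q at the nodes
  have hQval : ∀ i : Fin (N + 1), Q.eval (ν i) = if i = j then 1 else 0 := by
    intro i
    have hiN : (i : ℕ) ≤ N := Nat.lt_succ_iff.mp i.isLt
    have horto := ortho N (i : ℕ) (j : ℕ) hiN hjN
    have hNsplit := Finset.sum_Icc_succ_top (a := 1) (b := N - 1)
      (by omega) (fun k => 2 * Real.cos ((k : ℝ) * (π - θr j))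
        * Real.cos ((k : ℝ) * (π - θr i)))
    rw [show N - 1 + 1 = N from by omega] at hNsplit
    rw [hNsplit] at horto
    have hite : (if (i : ℕ) = (j : ℕ) then (1 : ℝ) else 0) = (if i = j then 1 else 0) := by
      simp [Fin.ext_iff]
    rw [hite] at horto
    rw [hQx (ν i)]
    rw [hTeval (N : ℤ) i]
    have hmid : ∀ k ∈ Finset.Icc 1 (N - 1),
        (2 * (T ℝ (k : ℤ)).eval (ν j) / ((N : ℝ) + 1)) * (T ℝ (k : ℤ)).eval (ν i)
          = 1 / ((N : ℝ) + 1) * (2 * Real.cos ((k : ℝ) * (π - θr j))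
              * Real.cos ((k : ℝ) * (π - θr i))) := by
      intro k _
      rw [hTeval (k : ℤ) j, hTeval (k : ℤ) i]
      push_cast
      ring
    rw [Finset.sum_congr rfl hmid, ← Finset.mul_sum]
    have hlast : c * Real.cos ((((N : ℤ) : ℝ)) * (π - θr i))
        = 1 / ((N : ℝ) + 1) * (2 * Real.cos ((N : ℝ) * (π - θr j))
            * Real.cos ((N : ℝ) * (π - θr i))) := by
      rw [hc, hTN]
      push_cast
      ring
    rw [hlast]
    have : (T ℝ (0 : ℤ)).eval (ν i) = 1 := by simp
    rw [this]
    calc 1 / ((N : ℝ) + 1) * 1 +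
          1 / ((N : ℝ) + 1) * (∑ k ∈ Finset.Icc 1 (N - 1),
            2 * Real.cos ((k : ℝ) * (π - θr j)) * Real.cos ((k : ℝ) * (π - θr i))) +
          1 / ((N : ℝ) + 1) * (2 * Real.cos ((N : ℝ) * (π - θr j))
            * Real.cos ((N : ℝ) * (π - θr i)))
        = 1 / ((N : ℝ) + 1) * (1 + ((∑ k ∈ Finset.Icc 1 (N - 1),
            2 * Real.cos ((k : ℝ) * (π - θr j)) * Real.cos ((k : ℝ) * (π - θr i)))
            + 2 * Real.cos ((N : ℝ) * (π - θr j)) * Real.cos ((N : ℝ) * (π - θr i)))) := by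
          ring
      _ = 1 / ((N : ℝ) + 1) * (((N : ℝ) + 1) * (if i = j then 1 else 0)) := by rw [horto]
      _ = (if i = j then 1 else 0) := by field_simp
  -- injectivity of the nodes
  have hinj : Function.Injective ν := by
    intro a b hab
    rw [hν' a, hν' b] at hab
    have ha := hθmem a
    have hb := hθmem b
    have : π - θr a = π - θr b := by
      apply Real.injOn_cos ⟨by linarith [ha.2], by linarith [ha.1]⟩
        ⟨by linarith [hb.2], by linarith [hb.1]⟩ hab
    have hθeq : θr a = θr b := by linarith
    rw [hθr] at hθeq
    simp only at hθeq
    have h2N : (2 * (N : ℝ) + 2) ≠ 0 := by positivity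
    field_simp at hθeq
    have h : ((a : ℕ) : ℝ) = ((b : ℕ) : ℝ) := by linarith
    have : (a : ℕ) = (b : ℕ) := by exact_mod_cast h
    exact Fin.ext this
  -- degree of Q
  have hdegQ : Q.natDegree ≤ N := by
    rw [hQ]
    refine (Polynomial.natDegree_add_le _ _).trans (max_le
      ((Polynomial.natDegree_add_le _ _).trans (max_le ?_ ?_)) ?_)
    · refine (Polynomial.natDegree_mul_le).trans ?_
      simp
    · apply Polynomial.natDegree_sum_le_of_forall_le
      intro k hk
      refine (Polynomial.natDegree_mul_le).trans ?_
      simp only [Polynomial.natDegree_C, zero_add]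
      exact (natDegree_T_le k).trans (by
        have := (Finset.mem_Icc.mp hk).2; omega)
    · refine (Polynomial.natDegree_mul_le).trans ?_
      simp only [Polynomial.natDegree_C, zero_add]
      exact natDegree_T_le N
  -- uniqueness
  have hLQ : ℓ j = Q := by
    have hzero : ℓ j - Q = 0 := by
      apply Polynomial.eq_zero_of_natDegree_lt_card_of_eval_eq_zero _ hinj
      · intro i
        rw [Polynomial.eval_sub, hval i j, hQval i, sub_self]
      · refine lt_of_le_of_lt ((Polynomial.natDegree_sub_le _ _).trans
          (max_le (hdeg j) hdegQ)) ?_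
        simp
    exact sub_eq_zero.mp hzero
  rw [hLQ, hQx x]
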